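/- For all integers m ≥ 0, k ≥ 2, and i ≥ 1, the following alternating-sum binomial identity holds: Σ_{l=0}^{k-1} (-1)^l C(m+1, l) C(i+k-l-2, i-1) C(m+k-l, m+1-i) = (-1)^{k-1} C(m+1, i+k-1). -/

import Mathlib

open Finset

lemma alt_base (n b : ℕ) :
    ∑ t ∈ Finset.range (b+1), (-1:ℤ)^t * ((n+1).choose (b-t) : ℤ) = (n.choose b : ℤ) := by
  induction b with
  | zero => simp
  | succ b ih =>
    rw [Finset.sum_range_succ']
    have h1 : ∀ t ∈ Finset.range (b+1),
        (-1:ℤ)^(t+1) * ((n+1).choose (b+1-(t+1)) : ℤ)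
          = -((-1:ℤ)^t * ((n+1).choose (b-t) : ℤ)) := by
      intro t ht
      have : b + 1 - (t+1) = b - t := by omega
      rw [this]; ring
    rw [Finset.sum_congr rfl h1, Finset.sum_neg_distrib, ih]
    simp [Nat.choose_succ_succ' n b]

lemma alt_vdm (n : ℕ) : ∀ a b : ℕ, a + 1 ≤ n →
    ∑ t ∈ Finset.range (b+1), (-1:ℤ)^t * ((a+t).choose t : ℤ) * (n.choose (b-t) : ℤ)
      = ((n - (a+1)).choose b : ℤ) := by
  intro a
  induction a with
  | zero =>
    intro b h
    obtain ⟨c, rfl⟩ : ∃ c, n = c + 1 := ⟨n - 1, by omega⟩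
    simpa using alt_base c b
  | succ a iha =>
    intro b
    induction b with
    | zero => intro h; simp
    | succ b ihb =>
      intro h
      have hb := ihb h
      have ha := iha (b+1) (by omega)
      rw [Finset.sum_range_succ'] at ha ⊢
      -- pascal split on the summand of the goal
      have key : ∀ t ∈ Finset.range (b+1),
          (-1:ℤ)^(t+1) * ((a+1+(t+1)).choose (t+1) : ℤ) * (n.choose (b+1-(t+1)) : ℤ)
            = (-1:ℤ)^(t+1) * ((a+(t+1)).choose (t+1) : ℤ) * (n.choose (b+1-(t+1)) : ℤ)
              - (-1:ℤ)^t * ((a+1+t).choose t : ℤ) * (n.choose (b-t) : ℤ) := by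
        intro t ht
        have e1 : a+1+(t+1) = (a+1+t) + 1 := by omega
        have e2 : b+1-(t+1) = b - t := by omega
        rw [e1, e2, Nat.choose_succ_succ (a+1+t) t]
        have e3 : a + (t+1) = a + 1 + t := by omega
        rw [e3]
        push_cast
        ring
      rw [Finset.sum_congr rfl key, Finset.sum_sub_distrib, hb]
      -- reconstruct iha sum
      have : (∑ t ∈ Finset.range (b+1),
          (-1:ℤ)^(t+1) * ((a+(t+1)).choose (t+1) : ℤ) * (n.choose (b+1-(t+1)) : ℤ))
          = ((n - (a+1)).choose (b+1) : ℤ)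
            - (-1:ℤ)^0 * ((a+0).choose 0 : ℤ) * (n.choose (b+1-0) : ℤ) := by
        rw [← ha]; ring
      rw [this]
      simp only [pow_zero, Nat.choose_zero_right, Nat.cast_one, one_mul, Nat.sub_zero,
        Nat.add_zero]
      have e4 : n - (a+1) = (n - (a+2)) + 1 := by omega
      rw [e4, Nat.choose_succ_succ' (n - (a+2)) b]
      push_cast
      ring

lemma inner_sum_aux (i' s r d : ℕ) :
    ∑ j ∈ Finset.range (s+1+r), (-1:ℤ)^j * ((i'+s+d+1).choose (s+r-j) : ℤ)
        * ((i'+j).choose (i'+s) : ℤ)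
      = (-1:ℤ)^s * (d.choose r : ℤ) := by
  rw [Finset.range_eq_Ico, ← Finset.sum_Ico_consecutive _ (Nat.zero_le s) (by omega : s ≤ s+1+r)]
  have h0 : ∑ j ∈ Finset.Ico 0 s, (-1:ℤ)^j * ((i'+s+d+1).choose (s+r-j) : ℤ)
      * ((i'+j).choose (i'+s) : ℤ) = 0 := by
    apply Finset.sum_eq_zero
    intro j hj
    simp only [Finset.mem_Ico] at hj
    rw [Nat.choose_eq_zero_of_lt (by omega : i'+j < i'+s)]
    simp
  rw [h0, zero_add, Finset.sum_Ico_eq_sum_range]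
  have e : s + 1 + r - s = r + 1 := by omega
  rw [e]
  have key : ∀ t ∈ Finset.range (r+1),
      (-1:ℤ)^(s+t) * ((i'+s+d+1).choose (s+r-(s+t)) : ℤ) * ((i'+(s+t)).choose (i'+s) : ℤ)
        = (-1:ℤ)^s * ((-1:ℤ)^t * (((i'+s)+t).choose t : ℤ)
            * ((i'+s+d+1).choose (r-t) : ℤ)) := by
    intro t ht
    have e1 : s + r - (s+t) = r - t := by omega
    have e2 : i' + (s+t) = (i'+s) + t := by omega
    rw [e1, e2, ← Nat.choose_symm_add]
    push_cast
    ring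
  rw [Finset.sum_congr rfl key, ← Finset.mul_sum,
    alt_vdm (i'+s+d+1) (i'+s) r (by omega)]
  have e3 : i'+s+d+1 - (i'+s+1) = d := by omega
  rw [e3]

lemma trinom (x j s : ℕ) :
    (x+j).choose x * j.choose s = (x+j).choose (x+s) * (x+s).choose x := by
  rcases le_or_gt s j with h | h
  · have h1 := Nat.choose_mul (n := x+j) (show x ≤ x+s by omega)
    rw [show x+j-x = j by omega, show x+s-x = s by omega] at h1
    omega
  · rw [Nat.choose_eq_zero_of_lt h, Nat.choose_eq_zero_of_lt (by omega : x+j < x+s)]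
    simp

lemma trinom2 (n x y : ℕ) :
    n.choose x * (n-x).choose y = n.choose (x+y) * (x+y).choose x := by
  rcases le_or_gt (x+y) n with h | h
  · have h1 := Nat.choose_mul (n := n) (show x ≤ x+y by omega)
    rw [show x+y-x = y by omega] at h1
    omega
  · rcases le_or_gt x n with h2 | h2
    · rw [Nat.choose_eq_zero_of_lt h, Nat.choose_eq_zero_of_lt (by omega : n - x < y)]
      simp
    · rw [Nat.choose_eq_zero_of_lt h2, Nat.choose_eq_zero_of_lt h]
      simp

lemma U_eq (i' N k : ℕ) (hk : 1 ≤ k) (hN : k - 1 ≤ N) :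
    ∑ s ∈ Finset.range (N+1),
        (-1:ℤ)^s * ((i'+k).choose (i'+1+s) : ℤ) * ((i'+s).choose i' : ℤ) = 1 := by
  rw [← Finset.sum_subset (Finset.range_subset_range.mpr (by omega : k ≤ N+1))
      (fun s _ hs => by
        rw [Nat.choose_eq_zero_of_lt (by simp only [Finset.mem_range] at hs; omega :
          i'+k < i'+1+s)]
        simp)]
  have key : ∀ s ∈ Finset.range k,
      (-1:ℤ)^s * ((i'+k).choose (i'+1+s) : ℤ) * ((i'+s).choose i' : ℤ)
        = (-1:ℤ)^s * ((i'+s).choose s : ℤ) * ((i'+k).choose (k-1-s) : ℤ) := by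
    intro s hs
    simp only [Finset.mem_range] at hs
    rw [show (i'+k).choose (k-1-s) = (i'+k).choose (i'+k - (k-1-s)) by
        rw [Nat.choose_symm (by omega)],
      show i'+k - (k-1-s) = i'+1+s by omega, ← Nat.choose_symm_add]
    ring
  rw [Finset.sum_congr rfl key]
  have h7 := alt_vdm (i'+k) i' (k-1) (by omega)
  rw [show Finset.range k = Finset.range ((k-1)+1) by rw [Nat.sub_add_cancel hk], h7,
    show i'+k-(i'+1) = k-1 by omega, Nat.choose_self, Nat.cast_one]

lemma T_eq (i' N k : ℕ) (hk : 1 ≤ k) :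
    ∑ j ∈ Finset.range k,
        (-1:ℤ)^j * ((i'+N+1).choose (k-1-j) : ℤ) * ((i'+j).choose i' : ℤ)
          * ((i'+N+1+j).choose N : ℤ)
      = ((i'+N+1).choose (i'+k) : ℤ) := by
  have expand : ∀ j ∈ Finset.range k,
      (-1:ℤ)^j * ((i'+N+1).choose (k-1-j) : ℤ) * ((i'+j).choose i' : ℤ)
          * ((i'+N+1+j).choose N : ℤ)
        = ∑ p ∈ Finset.HasAntidiagonal.antidiagonal N,
            (-1:ℤ)^j * ((i'+N+1).choose (k-1-j) : ℤ) * ((i'+j).choose i' : ℤ)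
              * (((i'+N+1).choose p.1 : ℤ) * ((j).choose p.2 : ℤ)) := by
    intro j _
    rw [← Finset.mul_sum]
    congr 1
    rw_mod_cast [Nat.add_choose_eq (i'+N+1) j N]
  rw [Finset.sum_congr rfl expand, Finset.sum_comm]
  have inner : ∀ p ∈ Finset.HasAntidiagonal.antidiagonal N,
      (∑ j ∈ Finset.range k,
        (-1:ℤ)^j * ((i'+N+1).choose (k-1-j) : ℤ) * ((i'+j).choose i' : ℤ)
          * (((i'+N+1).choose p.1 : ℤ) * ((j).choose p.2 : ℤ)))
      = ((i'+N+1).choose (i'+k) : ℤ)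
          * ((-1:ℤ)^p.2 * ((i'+k).choose (i'+1+p.2) : ℤ) * ((i'+p.2).choose i' : ℤ)) := by
    intro p hp
    simp only [Finset.HasAntidiagonal.mem_antidiagonal] at hp
    obtain ⟨a, s⟩ := p
    simp only at hp ⊢
    -- use trinomial on (i'+j).choose i' * j.choose s
    have tri : ∀ j ∈ Finset.range k,
        (-1:ℤ)^j * ((i'+N+1).choose (k-1-j) : ℤ) * ((i'+j).choose i' : ℤ)
          * (((i'+N+1).choose a : ℤ) * ((j).choose s : ℤ))
        = (((i'+N+1).choose a : ℤ) * ((i'+s).choose i' : ℤ))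
            * ((-1:ℤ)^j * ((i'+N+1).choose (k-1-j) : ℤ) * ((i'+j).choose (i'+s) : ℤ)) := by
      intro j _
      have := trinom i' j s
      have hc : ((i'+j).choose i' : ℤ) * ((j).choose s : ℤ)
          = ((i'+j).choose (i'+s) : ℤ) * ((i'+s).choose i' : ℤ) := by exact_mod_cast this
      linear_combination ((-1:ℤ)^j * ((i'+N+1).choose (k-1-j) : ℤ) * ((i'+N+1).choose a : ℤ)) * hc
    rw [Finset.sum_congr rfl tri, ← Finset.mul_sum]
    rcases le_or_gt k (s) with hks | hks
    · -- s ≥ k : inner sum is zero and RHS factor is zero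
      rw [Finset.sum_eq_zero (fun j hj => by
        simp only [Finset.mem_range] at hj
        rw [Nat.choose_eq_zero_of_lt (by omega : i'+j < i'+s)]
        simp)]
      rw [Nat.choose_eq_zero_of_lt (by omega : i'+k < i'+1+s)]
      simp
    · -- s ≤ k-1
      have hkr : k = s + 1 + (k-1-s) := by omega
      set r := k - 1 - s with hr
      have hN2 : a + s = N := hp
      have hm : i'+N+1 = i'+s+a+1 := by omega
      have hsum : (∑ j ∈ Finset.range k,
          (-1:ℤ)^j * ((i'+N+1).choose (k-1-j) : ℤ) * ((i'+j).choose (i'+s) : ℤ))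
          = (-1:ℤ)^s * (a.choose r : ℤ) := by
        calc (∑ j ∈ Finset.range k,
            (-1:ℤ)^j * ((i'+N+1).choose (k-1-j) : ℤ) * ((i'+j).choose (i'+s) : ℤ))
            = ∑ j ∈ Finset.range (s+1+r),
              (-1:ℤ)^j * ((i'+s+a+1).choose (s+r-j) : ℤ) * ((i'+j).choose (i'+s) : ℤ) := by
              rw [← hkr, ← hm]
              exact Finset.sum_congr rfl (fun j _ => by rw [show k-1-j = s+r-j by omega])
          _ = (-1:ℤ)^s * (a.choose r : ℤ) := inner_sum_aux i' s r a
      rw [hsum]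
      -- now C(m+1, a) = C(m+1, i'+1+s), and trinom2
      have sym : (i'+N+1).choose a = (i'+N+1).choose (i'+1+s) := by
        rw [show i'+N+1 = (i'+1+s) + a by omega, Nat.choose_symm_add]
      have t2 := trinom2 (i'+N+1) (i'+1+s) r
      rw [show i'+N+1 - (i'+1+s) = a by omega, show i'+1+s+r = i'+k by omega] at t2
      have t2' : ((i'+N+1).choose (i'+1+s) : ℤ) * (a.choose r : ℤ)
          = ((i'+N+1).choose (i'+k) : ℤ) * ((i'+k).choose (i'+1+s) : ℤ) := by
        exact_mod_cast t2
      rw [sym]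
      linear_combination ((-1:ℤ)^s * ((i'+s).choose i' : ℤ)) * t2'
  rw [Finset.sum_congr rfl inner, ← Finset.mul_sum]
  -- now evaluate U or use zero factor
  rcases le_or_gt (k-1) N with hN | hN
  · rw [Finset.Nat.sum_antidiagonal_eq_sum_range_succ
      (fun a s => (-1:ℤ)^s * ((i'+k).choose (i'+1+s) : ℤ) * ((i'+s).choose i' : ℤ))]
    have h5 : ∑ x ∈ Finset.range (N+1), ((-1:ℤ)^(N-x) * ((i'+k).choose (i'+1+(N-x)) : ℤ)
        * ((i'+(N-x)).choose i' : ℤ)) = 1 := by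
      have h6 := Finset.sum_range_reflect (fun s => (-1:ℤ)^s * ((i'+k).choose (i'+1+s) : ℤ)
        * ((i'+s).choose i' : ℤ)) (N+1)
      have h8 : ∑ x ∈ Finset.range (N+1), ((-1:ℤ)^(N-x) * ((i'+k).choose (i'+1+(N-x)) : ℤ)
          * ((i'+(N-x)).choose i' : ℤ))
          = ∑ x ∈ Finset.range (N+1), ((-1:ℤ)^(N+1-1-x) * ((i'+k).choose (i'+1+(N+1-1-x)) : ℤ)
          * ((i'+(N+1-1-x)).choose i' : ℤ)) :=
        Finset.sum_congr rfl (fun x hx => by rw [show N+1-1-x = N-x by omega])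
      rw [h8, h6, U_eq i' N k hk hN]
    rw [Nat.succ_eq_add_one, h5, mul_one]
  · rw [Nat.choose_eq_zero_of_lt (by omega : i'+N+1 < i'+k)]
    simp

/-- Integer binomial coefficient with the convention C(a,b) = 0 if b < 0 or b > a. -/
def izC (a b : ℤ) : ℤ := if 0 ≤ b ∧ b ≤ a then (a.toNat).choose b.toNat else 0

lemma izC_natCast (a b : ℕ) (h : b ≤ a) : izC (a : ℤ) (b : ℤ) = (a.choose b : ℤ) := by
  simp [izC, h]

/-- alternating-sum binomial identity. -/
theorem stmt_1 (m k i : ℕ) (hk : 2 ≤ k) (hi : 1 ≤ i) :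
    ∑ l ∈ Finset.range k,
        (-1 : ℤ) ^ l * ((m + 1).choose l : ℤ) * ((i + k - l - 2).choose (i - 1) : ℤ) *
          izC ((m : ℤ) + k - l) ((m : ℤ) + 1 - i)
      = (-1 : ℤ) ^ (k - 1) * ((m + 1).choose (i + k - 1) : ℤ) := by
  rcases le_or_gt i (m+1) with him | him
  · -- main case
    set i' := i - 1 with hi'
    set N := m + 1 - i with hNdef
    have hmN : m + 1 = i' + N + 1 := by omega
    have step1 : ∀ l ∈ Finset.range k,
        (-1 : ℤ) ^ l * ((m + 1).choose l : ℤ) * ((i + k - l - 2).choose (i - 1) : ℤ) *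
          izC ((m : ℤ) + k - l) ((m : ℤ) + 1 - i)
        = (-1 : ℤ) ^ l * (((i'+N+1)).choose l : ℤ) * ((i' + (k-1-l)).choose i' : ℤ) *
          ((i'+N+1 + (k-1-l)).choose N : ℤ) := by
      intro l hl
      simp only [Finset.mem_range] at hl
      have e1 : (m : ℤ) + k - l = ((i'+N+1 + (k-1-l) : ℕ) : ℤ) := by push_cast; omega
      have e2 : (m : ℤ) + 1 - i = ((N : ℕ) : ℤ) := by push_cast; omega
      rw [e1, e2, izC_natCast _ _ (by omega)]
      rw [show i + k - l - 2 = i' + (k-1-l) by omega, show i - 1 = i' by omega,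
        show m + 1 = i'+N+1 by omega]
    rw [Finset.sum_congr rfl step1,
      ← Finset.sum_range_reflect (fun l => (-1 : ℤ) ^ l * (((i'+N+1)).choose l : ℤ)
        * ((i' + (k-1-l)).choose i' : ℤ) * ((i'+N+1 + (k-1-l)).choose N : ℤ)) k]
    have step2 : ∀ j ∈ Finset.range k,
        (-1 : ℤ) ^ (k-1-j) * (((i'+N+1)).choose (k-1-j) : ℤ)
          * ((i' + (k-1-(k-1-j))).choose i' : ℤ) * ((i'+N+1 + (k-1-(k-1-j))).choose N : ℤ)
        = (-1 : ℤ)^(k-1) * ((-1 : ℤ) ^ j * (((i'+N+1)).choose (k-1-j) : ℤ)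
          * ((i' + j).choose i' : ℤ) * ((i'+N+1 + j).choose N : ℤ)) := by
      intro j hj
      simp only [Finset.mem_range] at hj
      rw [show k-1-(k-1-j) = j by omega]
      have hsgn : (-1 : ℤ)^(k-1-j) * (-1:ℤ)^j = (-1:ℤ)^(k-1) := by
        rw [← pow_add, show k-1-j+j = k-1 by omega]
      have hsq : (-1 : ℤ)^j * (-1:ℤ)^j = 1 := by
        rw [← pow_add]
        exact Even.neg_one_pow ⟨j, by omega⟩
      have : (-1 : ℤ)^(k-1-j) = (-1:ℤ)^(k-1) * (-1:ℤ)^j := by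
        calc (-1 : ℤ)^(k-1-j) = (-1 : ℤ)^(k-1-j) * ((-1:ℤ)^j * (-1:ℤ)^j) := by rw [hsq]; ring
          _ = (-1:ℤ)^(k-1) * (-1:ℤ)^j := by rw [← mul_assoc, hsgn]
      rw [this]; ring
    rw [Finset.sum_congr rfl step2, ← Finset.mul_sum,
      T_eq i' N k (by omega)]
    rw [show i + k - 1 = i' + k by omega, show m + 1 = i'+N+1 by omega]
  · -- degenerate case: i > m+1
    have hz : ∀ l ∈ Finset.range k,
        (-1 : ℤ) ^ l * ((m + 1).choose l : ℤ) * ((i + k - l - 2).choose (i - 1) : ℤ) *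
          izC ((m : ℤ) + k - l) ((m : ℤ) + 1 - i) = 0 := by
      intro l _
      have : izC ((m : ℤ) + k - l) ((m : ℤ) + 1 - i) = 0 := by
        rw [izC, if_neg]
        push_neg
        intro h
        exfalso
        omega
      rw [this, mul_zero]
    rw [Finset.sum_eq_zero hz, Nat.choose_eq_zero_of_lt (by omega : m + 1 < i + k - 1)]
    simp
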